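/- arXiv:0907.0079 — 3 statements merged into one kernel-verified Lean document; each statement's English description precedes it below -/
import Mathlib

section
/- Let P₀ be a probability measure on ℝ^k with P₀(H) < γ for every affine hyperplane H ⊂ ℝ^k, and let (P_n) be a sequence of probability measures on ℝ^k converging weakly to P₀. Then there exist ε > 0 and n₀ ≥ 1 such that for n = 0 and all n ≥ n₀, for every a ∈ ℝ^k with ‖a‖ = 1, every μ ∈ ℝ^k, and every r > 0 with P_n(H(a,μ,r)) ≥ γ − ε, one has ∫_{H(a,μ,r)} (aᵀ(x−μ))² P_n(dx) ≥ ε. -/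
open MeasureTheory Filter Topology
open scoped ENNReal Classical

noncomputable section

abbrev Vec (k : ℕ) := EuclideanSpace ℝ (Fin k)

def memK {k : ℕ} (P : Measure (Vec k)) (γ : ℝ) (φ : Vec k → ℝ) : Prop :=
  Measurable φ ∧ (∀ x, 0 ≤ φ x ∧ φ x ≤ 1) ∧ γ ≤ ∫ x, φ x ∂P ∧
    Integrable (fun x => ‖x‖ ^ 2 * φ x) P

def trimMean {k : ℕ} (P : Measure (Vec k)) (φ : Vec k → ℝ) : Vec k :=
  (∫ x, φ x ∂P)⁻¹ • ∫ x, φ x • x ∂P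

def trimCov {k : ℕ} (P : Measure (Vec k)) (φ : Vec k → ℝ) : Matrix (Fin k) (Fin k) ℝ :=
  Matrix.of fun i j =>
    (∫ x, φ x ∂P)⁻¹ * ∫ x, φ x * ((x i - trimMean P φ i) * (x j - trimMean P φ j)) ∂P

def ellipsoid {k : ℕ} (μ : Vec k) (S : Matrix (Fin k) (Fin k) ℝ) (ρ : ℝ) : Set (Vec k) :=
  {x | ∑ i, ∑ j, (x i - μ i) * S⁻¹ i j * (x j - μ j) ≤ ρ ^ 2}

def trimRadius {k : ℕ} (P : Measure (Vec k)) (γ : ℝ) (φ : Vec k → ℝ) : ℝ :=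
  sInf {s : ℝ | 0 < s ∧ γ ≤ (P (ellipsoid (trimMean P φ) (trimCov P φ) s)).toReal}

def Minimizing {k : ℕ} (P : Measure (Vec k)) (γ : ℝ) (φ : Vec k → ℝ) : Prop :=
  memK P γ φ ∧ ∀ ψ, memK P γ ψ → (trimCov P φ).det ≤ (trimCov P ψ).det

def IsMCD {k : ℕ} (P : Measure (Vec k)) (γ : ℝ) (T : Vec k)
    (C : Matrix (Fin k) (Fin k) ℝ) : Prop :=
  ∃ φ, Minimizing P γ φ ∧ T = trimMean P φ ∧ C = trimCov P φ

def HypSmall {k : ℕ} (P : Measure (Vec k)) (γ : ℝ) : Prop :=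
  ∀ (a : Vec k) (c : ℝ), a ≠ 0 → (P {x | (inner ℝ a x : ℝ) = c}).toReal < γ

def WeakLim {k : ℕ} (P : ℕ → Measure (Vec k)) (P₀ : Measure (Vec k)) : Prop :=
  ∀ f : BoundedContinuousFunction (Vec k) ℝ,
    Tendsto (fun n => ∫ x, f x ∂(P n)) atTop (𝓝 (∫ x, f x ∂P₀))

/-- The slab (cylinder) `H(a, μ, r) = {x : (aᵀ(x-μ))² ≤ r²}`. -/
def slab {k : ℕ} (a μ : Vec k) (r : ℝ) : Set (Vec k) :=
  {x | (inner ℝ a (x - μ) : ℝ) ^ 2 ≤ r ^ 2}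

lemma thin_closed {k : ℕ} (a : Vec k) (c d : ℝ) :
    IsClosed {x : Vec k | |(inner ℝ a x : ℝ) - c| ≤ d} := by
  have h : Continuous fun x : Vec k => |(inner ℝ a x : ℝ) - c| :=
    (((innerSL ℝ a).continuous).sub continuous_const).abs
  exact isClosed_le h continuous_const

lemma thinU_closed {k : ℕ} (a : Vec k) (c d Rp : ℝ) :
    IsClosed ({x : Vec k | |(inner ℝ a x : ℝ) - c| ≤ d} ∪ (Metric.ball (0 : Vec k) Rp)ᶜ) :=
  (thin_closed a c d).union (Metric.isOpen_ball).isClosed_compl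

lemma pointwise_thin {k : ℕ} (P₀ : Measure (Vec k)) [IsProbabilityMeasure P₀] {γ : ℝ}
    (hP₀ : HypSmall P₀ γ) {a : Vec k} (ha : ‖a‖ = 1) (c : ℝ) :
    ∃ d > (0:ℝ), ∃ Rp ≥ (1:ℝ),
      (P₀ ({x : Vec k | |(inner ℝ a x : ℝ) - c| ≤ 2*d} ∪ (Metric.ball (0:Vec k) Rp)ᶜ)).toReal
        < γ := by
  set s : ℕ → Set (Vec k) := fun n =>
    {x | |(inner ℝ a x : ℝ) - c| ≤ ((n:ℝ)+1)⁻¹} ∪ (Metric.ball (0:Vec k) ((n:ℝ)+1))ᶜ with hs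
  have hmeas : ∀ n, NullMeasurableSet (s n) P₀ := fun n =>
    ((thinU_closed a c _ _).measurableSet).nullMeasurableSet
  have hanti : Antitone s := by
    intro n m hnm
    apply Set.union_subset_union
    · intro x hx
      exact le_trans hx (by
        have : (n:ℝ) + 1 ≤ (m:ℝ) + 1 := by exact_mod_cast add_le_add_left (Nat.cast_le.mpr hnm) 1
        exact inv_anti₀ (by positivity) this)
    · intro x hx hx'
      exact hx (Metric.ball_subset_ball (by exact_mod_cast add_le_add_left (Nat.cast_le.mpr hnm) 1) hx')
  have hsub : (⋂ n, s n) ⊆ {x : Vec k | (inner ℝ a x : ℝ) = c} := by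
    intro x hx
    have hx' : ∀ n : ℕ, x ∈ s n := Set.mem_iInter.mp hx
    obtain ⟨n₁, hn₁⟩ := exists_nat_gt ‖x‖
    have key : ∀ ε > (0:ℝ), |(inner ℝ a x : ℝ) - c| ≤ ε := by
      intro ε hε
      obtain ⟨n₂, hn₂⟩ := exists_nat_one_div_lt hε
      set m := max n₁ n₂
      have hball : x ∈ Metric.ball (0 : Vec k) ((m:ℝ)+1) := by
        rw [Metric.mem_ball, dist_zero_right]
        calc ‖x‖ < n₁ := hn₁
        _ ≤ (m:ℝ) := by exact_mod_cast le_max_left n₁ n₂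
        _ < (m:ℝ) + 1 := by linarith
      rcases hx' m with h | h
      · calc |(inner ℝ a x : ℝ) - c| ≤ ((m:ℝ)+1)⁻¹ := h
          _ ≤ ((n₂:ℝ)+1)⁻¹ := inv_anti₀ (by positivity)
              (by exact_mod_cast add_le_add_left (Nat.cast_le.mpr (le_max_right n₁ n₂)) 1)
          _ ≤ ε := by rw [← one_div]; exact hn₂.le
      · exact absurd hball h
    have : |(inner ℝ a x : ℝ) - c| ≤ 0 := by
      by_contra h
      push_neg at h
      nlinarith [key (|(inner ℝ a x : ℝ) - c| / 2) (by positivity)]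
    have := le_antisymm this (abs_nonneg _)
    simpa [abs_eq_zero, sub_eq_zero] using this
  have ha0 : a ≠ 0 := by intro h; rw [h, norm_zero] at ha; norm_num at ha
  have hlt : P₀ (⋂ n, s n) < ENNReal.ofReal γ := by
    calc P₀ (⋂ n, s n) ≤ P₀ {x : Vec k | (inner ℝ a x : ℝ) = c} := measure_mono hsub
    _ < ENNReal.ofReal γ := (ENNReal.lt_ofReal_iff_toReal_lt (measure_ne_top _ _)).mpr (hP₀ a c ha0)
  have htend := tendsto_measure_iInter_atTop hmeas hanti ⟨0, measure_ne_top _ _⟩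
  obtain ⟨n, hn⟩ := (htend.eventually_lt_const hlt).exists
  refine ⟨((n:ℝ)+1)⁻¹ / 2, by positivity, (n:ℝ)+1, by
    have : (0:ℝ) ≤ n := Nat.cast_nonneg n; linarith, ?_⟩
  have h2 : 2 * (((n:ℝ)+1)⁻¹ / 2) = ((n:ℝ)+1)⁻¹ := by ring
  rw [h2]
  exact (ENNReal.lt_ofReal_iff_toReal_lt (measure_ne_top _ _)).mp hn

lemma weakLim_limsup_closed {k : ℕ} {P₀ : Measure (Vec k)} [IsProbabilityMeasure P₀]
    {P : ℕ → Measure (Vec k)} [∀ n, IsProbabilityMeasure (P n)] (hconv : WeakLim P P₀)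
    {F : Set (Vec k)} (hF : IsClosed F) :
    atTop.limsup (fun n => P n F) ≤ P₀ F :=
  ProbabilityMeasure.limsup_measure_closed_le_of_tendsto
    (μ := ⟨P₀, inferInstance⟩) (μs := fun n => ⟨P n, inferInstance⟩)
    (ProbabilityMeasure.tendsto_iff_forall_integral_tendsto.mpr hconv) hF

lemma weakLim_liminf_open {k : ℕ} {P₀ : Measure (Vec k)} [IsProbabilityMeasure P₀]
    {P : ℕ → Measure (Vec k)} [∀ n, IsProbabilityMeasure (P n)] (hconv : WeakLim P P₀)
    {G : Set (Vec k)} (hG : IsOpen G) :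
    P₀ G ≤ atTop.liminf (fun n => P n G) :=
  ProbabilityMeasure.le_liminf_measure_open_of_tendsto
    (μ := ⟨P₀, inferInstance⟩) (μs := fun n => ⟨P n, inferInstance⟩)
    (ProbabilityMeasure.tendsto_iff_forall_integral_tendsto.mpr hconv) hG

lemma uniform_thin {k : ℕ} (hk : 1 ≤ k) {γ : ℝ} (hγ0 : 0 < γ) (hγ1 : γ ≤ 1)
    (P₀ : Measure (Vec k)) [IsProbabilityMeasure P₀]
    (P : ℕ → Measure (Vec k)) [∀ n, IsProbabilityMeasure (P n)]
    (hP₀ : HypSmall P₀ γ) (hconv : WeakLim P P₀) :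
    ∃ δ > (0:ℝ), δ ≤ 1 ∧ ∃ β > (0:ℝ), ∃ n₀ : ℕ, 1 ≤ n₀ ∧
      ∀ Q : Measure (Vec k), (Q = P₀ ∨ ∃ n, n₀ ≤ n ∧ Q = P n) →
        ∀ a : Vec k, ‖a‖ = 1 → ∀ c : ℝ,
          (Q {x : Vec k | |(inner ℝ a x : ℝ) - c| ≤ δ}).toReal ≤ γ - β := by
  -- Step 1: a tail radius R for P₀
  have hUnion : (⋃ m : ℕ, Metric.ball (0:Vec k) (m:ℝ)) = Set.univ := by
    ext x
    simp only [Set.mem_iUnion, Metric.mem_ball, dist_zero_right, Set.mem_univ, iff_true]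
    obtain ⟨m, hm⟩ := exists_nat_gt ‖x‖
    exact ⟨m, hm⟩
  have hmono : Monotone (fun m : ℕ => Metric.ball (0:Vec k) (m:ℝ)) :=
    fun n m h => Metric.ball_subset_ball (by exact_mod_cast h)
  have htend := tendsto_measure_iUnion_atTop (μ := P₀) hmono
  rw [hUnion, measure_univ] at htend
  have hlt1 : ENNReal.ofReal (1 - γ/8) < 1 := ENNReal.ofReal_lt_one.mpr (by linarith)
  obtain ⟨R, hR⟩ := ((htend.eventually_const_lt hlt1).and (eventually_ge_atTop 1)).exists
  simp only [Function.comp] at hR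
  -- Step 2: pointwise choice of widths and gaps
  have h1 : ∀ p : Vec k × ℝ, ∃ d, 0 < d ∧ ∃ Rp, 1 ≤ Rp ∧ ∃ b, 0 < b ∧ b ≤ γ/8 ∧
      (‖p.1‖ = 1 →
        (P₀ ({x : Vec k | |(inner ℝ p.1 x : ℝ) - p.2| ≤ 2*d} ∪ (Metric.ball (0:Vec k) Rp)ᶜ)).toReal
          ≤ γ - 4*b) := by
    intro p
    by_cases hp : ‖p.1‖ = 1
    · obtain ⟨d, hd, Rp, hRp, hm⟩ := pointwise_thin P₀ hP₀ hp p.2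
      refine ⟨d, hd, Rp, hRp,
        min ((γ - (P₀ ({x : Vec k | |(inner ℝ p.1 x : ℝ) - p.2| ≤ 2*d} ∪
          (Metric.ball (0:Vec k) Rp)ᶜ)).toReal)/4) (γ/8),
        lt_min (by linarith) (by linarith), min_le_right _ _, fun _ => ?_⟩
      have h4 := min_le_left ((γ - (P₀ ({x : Vec k | |(inner ℝ p.1 x : ℝ) - p.2| ≤ 2*d} ∪
          (Metric.ball (0:Vec k) Rp)ᶜ)).toReal)/4) (γ/8)
      linarith
    · exact ⟨1, one_pos, 1, le_refl 1, γ/8, by linarith, le_refl _, fun h => absurd h hp⟩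
  choose D hD Rf hRf B hB hB8 hPbound using h1
  have hRfpos : ∀ p, (0:ℝ) < Rf p := fun p => lt_of_lt_of_le one_pos (hRf p)
  -- Step 3: compactness and finite subcover
  set K : Set (Vec k × ℝ) := Metric.sphere (0:Vec k) 1 ×ˢ Set.Icc (-(R:ℝ)-1) ((R:ℝ)+1) with hK
  have hKc : IsCompact K := (isCompact_sphere 0 1).prod isCompact_Icc
  set U : Vec k × ℝ → Set (Vec k × ℝ) := fun p =>
    Metric.ball p.1 (D p / (2 * Rf p)) ×ˢ Metric.ball p.2 (D p / 2) with hU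
  have hUnhds : ∀ p ∈ K, U p ∈ 𝓝 p := fun p _ =>
    prod_mem_nhds (Metric.ball_mem_nhds _ (by have := hD p; have := hRfpos p; positivity))
      (Metric.ball_mem_nhds _ (by have := hD p; positivity))
  obtain ⟨t, htK, htcov⟩ := hKc.elim_nhds_subcover U hUnhds
  have hKne : K.Nonempty := by
    refine ⟨(EuclideanSpace.single (⟨0, hk⟩ : Fin k) (1:ℝ), 0), ?_, ?_⟩
    · simp [mem_sphere_iff_norm, EuclideanSpace.norm_single]
    · constructor <;> [skip; skip] <;> · have : (0:ℝ) ≤ (R:ℝ) := Nat.cast_nonneg R; simp; linarith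
  have htne : t.Nonempty := by
    obtain ⟨p, hp⟩ := hKne
    obtain ⟨q, hq⟩ := Set.mem_iUnion₂.mp (htcov hp)
    exact ⟨q, hq.1⟩
  set δ0 := t.inf' htne (fun p => D p / 2) with hδ0
  set δ : ℝ := min δ0 1 with hδ
  set β0 := t.inf' htne B with hβ0
  set β : ℝ := min β0 (γ/8) with hβ
  have hδ0pos : 0 < δ0 := by
    rw [hδ0, Finset.lt_inf'_iff]
    intro p _
    have := hD p; positivity
  have hδpos : 0 < δ := lt_min hδ0pos one_pos
  have hδ1 : δ ≤ 1 := min_le_right _ _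
  have hβpos : 0 < β := lt_min (by rw [hβ0, Finset.lt_inf'_iff]; exact fun p _ => hB p) (by linarith)
  have hβ8 : β ≤ γ/8 := min_le_right _ _
  -- closed sets used in portmanteau
  set Fs : Vec k × ℝ → Set (Vec k) := fun p =>
    {x : Vec k | |(inner ℝ p.1 x : ℝ) - p.2| ≤ 2 * D p} ∪ (Metric.ball (0:Vec k) (Rf p))ᶜ with hFs
  have hsph : ∀ p ∈ t, ‖p.1‖ = 1 := by
    intro p hp
    have := (htK p hp).1
    simpa [mem_sphere_iff_norm] using this
  -- Step 4: eventual bounds for P n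
  have hev : ∀ p ∈ t, ∀ᶠ n in atTop, (P n (Fs p)).toReal ≤ γ - 3 * B p := by
    intro p hp
    have hls : atTop.limsup (fun n => P n (Fs p)) ≤ P₀ (Fs p) :=
      weakLim_limsup_closed hconv (thinU_closed p.1 p.2 (2 * D p) (Rf p))
    have hP₀p := hPbound p (hsph p hp)
    have hlt : atTop.limsup (fun n => P n (Fs p)) < ENNReal.ofReal (γ - 3 * B p) := by
      refine lt_of_le_of_lt hls ?_
      calc P₀ (Fs p) = ENNReal.ofReal ((P₀ (Fs p)).toReal) :=
            (ENNReal.ofReal_toReal (measure_ne_top _ _)).symm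
        _ ≤ ENNReal.ofReal (γ - 4 * B p) := ENNReal.ofReal_le_ofReal hP₀p
        _ < ENNReal.ofReal (γ - 3 * B p) := by
            apply (ENNReal.ofReal_lt_ofReal_iff ?_).mpr
            · have := hB p; linarith
            · have := hB8 p; linarith
    filter_upwards [eventually_lt_of_limsup_lt hlt] with n hn
    exact le_of_lt ((ENNReal.lt_ofReal_iff_toReal_lt (measure_ne_top _ _)).mp hn)
  have hevball : ∀ᶠ n in atTop, ENNReal.ofReal (1 - γ/8) < P n (Metric.ball (0:Vec k) (R:ℝ)) := by
    have hli := weakLim_liminf_open hconv (Metric.isOpen_ball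
      (x := (0:Vec k)) (ε := (R:ℝ)))
    exact eventually_lt_of_lt_liminf (lt_of_lt_of_le hR.1 hli)
  have hall : ∀ᶠ n in atTop, (∀ p ∈ t, (P n (Fs p)).toReal ≤ γ - 3 * B p) ∧
      ENNReal.ofReal (1 - γ/8) < P n (Metric.ball (0:Vec k) (R:ℝ)) :=
    ((t.eventually_all).mpr hev).and hevball
  obtain ⟨N, hN⟩ := eventually_atTop.mp hall
  -- Step 5: tail bound helper
  have tailbd : ∀ (Q : Measure (Vec k)), IsProbabilityMeasure Q →
      ENNReal.ofReal (1 - γ/8) < Q (Metric.ball (0:Vec k) (R:ℝ)) →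
      (Q (Metric.ball (0:Vec k) (R:ℝ))ᶜ).toReal ≤ γ/8 := by
    intro Q hQ h
    have h1 : 1 - γ/8 < (Q (Metric.ball (0:Vec k) (R:ℝ))).toReal :=
      (ENNReal.ofReal_lt_iff_lt_toReal (by linarith) (measure_ne_top _ _)).mp h
    have h2 : Q (Metric.ball (0:Vec k) (R:ℝ))ᶜ = 1 - Q (Metric.ball (0:Vec k) (R:ℝ)) :=
      prob_compl_eq_one_sub Metric.isOpen_ball.measurableSet
    have h3 : (Q (Metric.ball (0:Vec k) (R:ℝ))ᶜ).toReal =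
        1 - (Q (Metric.ball (0:Vec k) (R:ℝ))).toReal := by
      rw [h2, ENNReal.toReal_sub_of_le prob_le_one ENNReal.one_ne_top]
      simp
    linarith [h3]
  refine ⟨δ, hδpos, hδ1, β, hβpos, max N 1, le_max_right _ _, ?_⟩
  intro Q hQ a ha c
  have hQP : IsProbabilityMeasure Q := by
    rcases hQ with rfl | ⟨n, _, rfl⟩ <;> infer_instance
  have hQtail : ENNReal.ofReal (1 - γ/8) < Q (Metric.ball (0:Vec k) (R:ℝ)) := by
    rcases hQ with rfl | ⟨n, hn, rfl⟩
    · exact hR.1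
    · exact (hN n (le_trans (le_max_left _ _) hn)).2
  have hQF : ∀ p ∈ t, (Q (Fs p)).toReal ≤ γ - 3 * B p := by
    intro p hp
    rcases hQ with rfl | ⟨n, hn, rfl⟩
    · have := hPbound p (hsph p hp); have := hB p; linarith
    · exact (hN n (le_trans (le_max_left _ _) hn)).1 p hp
  by_cases hc : |c| ≤ (R:ℝ) + 1
  · -- covered case
    have hpK : (a, c) ∈ K := by
      refine ⟨?_, ?_⟩
      · simpa [mem_sphere_iff_norm] using ha
      · rcases abs_le.mp hc with ⟨h1, h2⟩
        exact ⟨by linarith, h2⟩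
    obtain ⟨p, hpmem⟩ := Set.mem_iUnion₂.mp (htcov hpK)
    obtain ⟨hpt, hpU⟩ := hpmem
    have hpU1 : dist a p.1 < D p / (2 * Rf p) := hpU.1
    have hpU2 : dist c p.2 < D p / 2 := hpU.2
    have hδDp : δ ≤ D p / 2 := le_trans (min_le_left _ _) (Finset.inf'_le _ hpt)
    have hsub : {x : Vec k | |(inner ℝ a x : ℝ) - c| ≤ δ} ⊆ Fs p := by
      intro x hx
      by_cases hxB : ‖x‖ < Rf p
      · left
        have e1 : (inner ℝ p.1 x : ℝ) - p.2 =
            ((inner ℝ a x : ℝ) - c) + (inner ℝ (p.1 - a) x : ℝ) + (c - p.2) := by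
          rw [inner_sub_left]; ring
        have e2 : |(inner ℝ (p.1 - a) x : ℝ)| ≤ ‖p.1 - a‖ * ‖x‖ := abs_real_inner_le_norm _ _
        have e3 : ‖p.1 - a‖ < D p / (2 * Rf p) := by
          rw [← dist_eq_norm, dist_comm]; exact hpU1
        have e4 : ‖p.1 - a‖ * ‖x‖ ≤ D p / (2 * Rf p) * Rf p :=
          mul_le_mul e3.le hxB.le (norm_nonneg _) (by have := hD p; have := hRfpos p; positivity)
        have e5 : D p / (2 * Rf p) * Rf p = D p / 2 := by
          have h0 : Rf p ≠ 0 := ne_of_gt (hRfpos p)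
          field_simp
        have e6 : |c - p.2| < D p / 2 := by rw [← Real.dist_eq]; exact hpU2
        have e7 : |(inner ℝ p.1 x : ℝ) - p.2| ≤ |(inner ℝ a x : ℝ) - c| +
            |(inner ℝ (p.1 - a) x : ℝ)| + |c - p.2| := by
          rw [e1]; exact (abs_add_le _ _).trans (add_le_add_left (abs_add_le _ _) _)
        have hxδ : |(inner ℝ a x : ℝ) - c| ≤ δ := hx
        show |(inner ℝ p.1 x : ℝ) - p.2| ≤ 2 * D p
        have := e4.trans_eq e5
        linarith
      · right
        simp only [Set.mem_compl_iff, Metric.mem_ball, dist_zero_right]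
        exact hxB
    calc (Q {x : Vec k | |(inner ℝ a x : ℝ) - c| ≤ δ}).toReal
        ≤ (Q (Fs p)).toReal := ENNReal.toReal_mono (measure_ne_top _ _) (measure_mono hsub)
      _ ≤ γ - 3 * B p := hQF p hpt
      _ ≤ γ - β := by
          have h1 : β ≤ B p := le_trans (min_le_left _ _) (Finset.inf'_le _ hpt)
          have := hB p
          linarith
  · -- far-away case
    push_neg at hc
    have hsub : {x : Vec k | |(inner ℝ a x : ℝ) - c| ≤ δ} ⊆ (Metric.ball (0:Vec k) (R:ℝ))ᶜ := by
      intro x hx hxB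
      rw [Metric.mem_ball, dist_zero_right] at hxB
      have h1 : |(inner ℝ a x : ℝ)| ≤ ‖x‖ := by
        have := abs_real_inner_le_norm a x
        rwa [ha, one_mul] at this
      have h2 : |c| - |(inner ℝ a x : ℝ)| ≤ |(inner ℝ a x : ℝ) - c| := by
        rw [abs_sub_comm]
        exact abs_sub_abs_le_abs_sub c ((inner ℝ a x : ℝ))
      have hxδ : |(inner ℝ a x : ℝ) - c| ≤ δ := hx
      linarith
    calc (Q {x : Vec k | |(inner ℝ a x : ℝ) - c| ≤ δ}).toReal
        ≤ (Q (Metric.ball (0:Vec k) (R:ℝ))ᶜ).toReal :=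
          ENNReal.toReal_mono (measure_ne_top _ _) (measure_mono hsub)
      _ ≤ γ/8 := tailbd Q hQP hQtail
      _ ≤ γ - β := by linarith


theorem slab_mass_lemma {k : ℕ} (hk : 1 ≤ k) (γ : ℝ) (hγ0 : 0 < γ) (hγ1 : γ ≤ 1)
    (P₀ : Measure (Vec k)) [IsProbabilityMeasure P₀]
    (P : ℕ → Measure (Vec k)) [∀ n, IsProbabilityMeasure (P n)]
    (hP₀ : HypSmall P₀ γ) (hconv : WeakLim P P₀) :
    ∃ ε > (0 : ℝ), ∃ n₀ : ℕ, 1 ≤ n₀ ∧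
      ∀ Q : Measure (Vec k), (Q = P₀ ∨ ∃ n, n₀ ≤ n ∧ Q = P n) →
        ∀ a : Vec k, ‖a‖ = 1 → ∀ μ : Vec k, ∀ r : ℝ, 0 < r →
          γ - ε ≤ (Q (slab a μ r)).toReal →
            ε ≤ ∫ x in slab a μ r, (inner ℝ a (x - μ) : ℝ) ^ 2 ∂Q := by
  obtain ⟨δ, hδpos, hδ1, β, hβpos, n₀, hn₀, hbound⟩ :=
    uniform_thin hk hγ0 hγ1 P₀ P hP₀ hconv
  refine ⟨β * δ^2 / (2 * (δ^2 + 1)), by positivity, n₀, hn₀, ?_⟩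
  set ε : ℝ := β * δ^2 / (2 * (δ^2 + 1)) with hε
  intro Q hQ a ha μ r hr hmass
  haveI hQP : IsProbabilityMeasure Q := by
    rcases hQ with rfl | ⟨n, _, rfl⟩ <;> infer_instance
  by_contra hcon
  push_neg at hcon
  set S : Set (Vec k) := slab a μ r with hS
  set f : Vec k → ℝ := fun x => (inner ℝ a (x - μ) : ℝ)^2 with hf
  have hfc : Continuous f :=
    (((innerSL ℝ a).continuous).comp (continuous_id.sub continuous_const)).pow 2
  have hSclosed : IsClosed S := isClosed_le hfc continuous_const
  have hSm : MeasurableSet S := hSclosed.measurableSet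
  have hint : IntegrableOn f S Q := by
    refine Integrable.mono' (integrable_const (r^2)) hfc.aestronglyMeasurable ?_
    refine (ae_restrict_iff' hSm).mpr (ae_of_all _ fun x hx => ?_)
    rw [Real.norm_eq_abs, abs_of_nonneg (sq_nonneg _)]
    exact hx
  set T : Set (Vec k) := {x : Vec k | |(inner ℝ a x : ℝ) - (inner ℝ a μ : ℝ)| ≤ δ} with hT
  have hTm : MeasurableSet T := (thin_closed a (inner ℝ a μ) δ).measurableSet
  have hfx : ∀ x : Vec k, f x = ((inner ℝ a x : ℝ) - (inner ℝ a μ : ℝ))^2 := fun x => by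
    simp only [hf, inner_sub_right]
  have hTbound : (Q T).toReal ≤ γ - β := hbound Q hQ a ha (inner ℝ a μ)
  have h3 : δ^2 * (Q (S \ T)).toReal ≤ ∫ x in S \ T, f x ∂Q := by
    rw [mul_comm]
    change Q.real (S \ T) • δ^2 ≤ _
    refine setIntegral_ge_of_const_le (hSm.diff hTm) (measure_ne_top _ _) (fun x hx => ?_)
      (hint.mono_set Set.diff_subset)
    have hxT : ¬ |(inner ℝ a x : ℝ) - (inner ℝ a μ : ℝ)| ≤ δ := hx.2
    push_neg at hxT
    have h1 : δ^2 ≤ |(inner ℝ a x : ℝ) - (inner ℝ a μ : ℝ)|^2 :=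
      pow_le_pow_left₀ hδpos.le hxT.le 2
    rw [sq_abs] at h1
    rw [hfx x]
    exact h1
  have h4 : ∫ x in S \ T, f x ∂Q ≤ ∫ x in S, f x ∂Q :=
    setIntegral_mono_set hint (ae_of_all _ fun x => sq_nonneg _)
      (HasSubset.Subset.eventuallyLE Set.diff_subset)
  have h5 : (Q (S \ T)).toReal ≤ ε / δ^2 := by
    have hlt : δ^2 * (Q (S \ T)).toReal < ε := lt_of_le_of_lt (h3.trans h4) hcon
    rw [le_div_iff₀ (by positivity)]
    linarith
  have h6 : (Q S).toReal ≤ (Q (S ∩ T)).toReal + (Q (S \ T)).toReal := by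
    calc (Q S).toReal ≤ (Q (S ∩ T) + Q (S \ T)).toReal :=
          ENNReal.toReal_mono
            (ENNReal.add_ne_top.mpr ⟨measure_ne_top _ _, measure_ne_top _ _⟩)
            (measure_le_inter_add_diff Q S T)
      _ = (Q (S ∩ T)).toReal + (Q (S \ T)).toReal :=
          ENNReal.toReal_add (measure_ne_top _ _) (measure_ne_top _ _)
  have h7 : (Q (S ∩ T)).toReal ≤ (Q T).toReal :=
    ENNReal.toReal_mono (measure_ne_top _ _) (measure_mono Set.inter_subset_right)
  have hεd : ε / δ^2 = β / (2*(δ^2+1)) := by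
    rw [hε]
    field_simp
  have hεv : ε = β * δ^2 / (2*(δ^2+1)) := hε
  have key : γ - ε ≤ γ - β + ε / δ^2 := by linarith
  rw [hεd] at key
  rw [hεv] at key
  have hd2 : (0:ℝ) < δ^2 + 1 := by positivity
  have : β ≤ β/2 := by
    have e1 : β * δ^2 / (2*(δ^2+1)) + β / (2*(δ^2+1)) = β/2 := by
      field_simp
    linarith
  linarith

end
end

section
/- Let Σ₁ and Σ₂ be symmetric k×k real matrices, with Σ₁ positive semidefinite and Σ₂ positive definite. If Tr(Σ₂⁻¹(Σ₁ − Σ₂)) < 0 then det Σ₁ < det Σ₂; similarly, if Tr(Σ₂⁻¹(Σ₁ − Σ₂)) ≤ 0 then det Σ₁ ≤ det Σ₂. -/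
open Matrix Finset

lemma trace_eq_sum_eigs {k : ℕ} {M : Matrix (Fin k) (Fin k) ℝ} (hM : M.IsHermitian) :
    M.trace = ∑ i, hM.eigenvalues i := by
  conv_lhs => rw [hM.spectral_theorem]
  rw [Unitary.conjStarAlgAut_apply, Matrix.trace_mul_cycle]
  rw [Unitary.coe_star_mul_self]
  simp [Matrix.trace_diagonal]

lemma det_le_exp_trace {k : ℕ} {M : Matrix (Fin k) (Fin k) ℝ} (hM : M.PosSemidef) :
    M.det ≤ Real.exp (M.trace - k) := by
  have hH := hM.1
  have hdet : M.det = ∏ i, hH.eigenvalues i := by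
    simpa using hH.det_eq_prod_eigenvalues
  rw [hdet, trace_eq_sum_eigs hH]
  calc ∏ i, hH.eigenvalues i ≤ ∏ i : Fin k, Real.exp (hH.eigenvalues i - 1) := by
        apply Finset.prod_le_prod
        · intro i _; exact hM.eigenvalues_nonneg i
        · intro i _
          have := Real.add_one_le_exp (hH.eigenvalues i - 1)
          linarith
    _ = Real.exp (∑ i, hH.eigenvalues i - k) := by
        rw [← Real.exp_sum]
        congr 1
        rw [Finset.sum_sub_distrib]
        simp

/-- If `Σ₁` is symmetric positive semidefinite, `Σ₂` is symmetric positive definite and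
`Tr(Σ₂⁻¹(Σ₁ - Σ₂)) < 0` (resp. `≤ 0`), then `det Σ₁ < det Σ₂` (resp. `≤`). -/
theorem det_lt_of_trace_neg {k : ℕ} (S1 S2 : Matrix (Fin k) (Fin k) ℝ)
    (h1 : S1.PosSemidef) (h2 : S2.PosDef) :
    ((S2⁻¹ * (S1 - S2)).trace < 0 → S1.det < S2.det) ∧
    ((S2⁻¹ * (S1 - S2)).trace ≤ 0 → S1.det ≤ S2.det) := by
  set B := (open MatrixOrder in CFC.sqrt S2) with hBdef
  have hBB : B * B = S2 := by open MatrixOrder in exact CFC.sqrt_mul_sqrt_self S2 h2.posSemidef.nonneg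
  have hdet2 : (0:ℝ) < S2.det := h2.det_pos
  have hdetB : B.det ≠ 0 := by
    intro h
    rw [← hBB, Matrix.det_mul, h, mul_zero] at hdet2
    exact lt_irrefl _ hdet2
  have hBH : B⁻¹.IsHermitian := by
    have : Bᴴ = B := by open MatrixOrder in exact (CFC.sqrt_nonneg S2).posSemidef.1
    rw [Matrix.IsHermitian, Matrix.conjTranspose_nonsing_inv, this]
  set M := B⁻¹ * S1 * B⁻¹ with hMdef
  have hM : M.PosSemidef := by
    have := h1.mul_mul_conjTranspose_same B⁻¹
    rwa [hBH.eq] at this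
  have hinv : B⁻¹ * B⁻¹ = S2⁻¹ := by rw [← Matrix.mul_inv_rev, hBB]
  have htr : M.trace = (S2⁻¹ * S1).trace := by
    rw [hMdef, Matrix.trace_mul_cycle, hinv]
  have hdetM : M.det = S1.det * (S2.det)⁻¹ := by
    rw [hMdef, Matrix.det_mul, Matrix.det_mul, Matrix.det_nonsing_inv, Ring.inverse_eq_inv,
      ← hBB, Matrix.det_mul, mul_inv]
    field_simp [hdetB]
  have hS2unit : IsUnit S2.det := isUnit_iff_ne_zero.mpr hdet2.ne'
  have hkey : (S2⁻¹ * (S1 - S2)).trace = M.trace - k := by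
    rw [mul_sub, Matrix.nonsing_inv_mul _ hS2unit, Matrix.trace_sub, Matrix.trace_one, htr]
    simp
  have hle : M.det ≤ Real.exp ((S2⁻¹ * (S1 - S2)).trace) := by
    rw [hkey]; exact det_le_exp_trace hM
  constructor
  · intro h
    have : M.det < 1 := lt_of_le_of_lt hle (by rw [← Real.exp_zero]; exact Real.exp_lt_exp.mpr h)
    rw [hdetM] at this
    calc S1.det = S1.det * (S2.det)⁻¹ * S2.det := by field_simp
      _ < 1 * S2.det := by exact mul_lt_mul_of_pos_right this hdet2
      _ = S2.det := one_mul _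
  · intro h
    have : M.det ≤ 1 := le_trans hle (by rw [← Real.exp_zero]; exact Real.exp_le_exp.mpr h)
    rw [hdetM] at this
    calc S1.det = S1.det * (S2.det)⁻¹ * S2.det := by field_simp
      _ ≤ 1 * S2.det := mul_le_mul_of_nonneg_right this hdet2.le
      _ = S2.det := one_mul _
end

section
/- Let x₁,…,x_n ∈ ℝ^k, 0 < γ ≤ 1, and let S_n be a subsample minimizing det Ĉ_n(S) over all subsamples S of size at least ⌈nγ⌉, such that Ĉ_n(S_n) is positive definite. Let Ê_n = E(T̂_n(S_n), Ĉ_n(S_n), r̂_n(S_n)), where r̂_n(S_n) = inf{ s > 0 : #{i : x_i ∈ E(T̂_n(S_n), Ĉ_n(S_n), s)} ≥ nγ }. Then S_n has exactly ⌈nγ⌉ points, S_n ⊂ Ê_n, and every sample point lying in Ê_n belongs to S_n. -/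
open MeasureTheory Filter Topology
open scoped ENNReal Classical

noncomputable section

def sampleMean {k : ℕ} {ι : Type*} (x : ι → Vec k) (S : Finset ι) : Vec k :=
  (S.card : ℝ)⁻¹ • ∑ i ∈ S, x i

def sampleCov {k : ℕ} {ι : Type*} (x : ι → Vec k) (S : Finset ι) :
    Matrix (Fin k) (Fin k) ℝ :=
  Matrix.of fun a b => (S.card : ℝ)⁻¹ *
    ∑ i ∈ S, (x i a - sampleMean x S a) * (x i b - sampleMean x S b)

/-- `S` is an MCD subsample: it has at least `⌈nγ⌉` points and minimizes the determinant of
the trimmed sample covariance among all subsamples with at least `⌈nγ⌉` points. -/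
def IsMCDSubsample {k n : ℕ} (x : Fin n → Vec k) (γ : ℝ) (S : Finset (Fin n)) : Prop :=
  ⌈(n : ℝ) * γ⌉₊ ≤ S.card ∧
    ∀ S' : Finset (Fin n), ⌈(n : ℝ) * γ⌉₊ ≤ S'.card →
      (sampleCov x S).det ≤ (sampleCov x S').det

/-- `r̂_n(S) = inf { s > 0 : #{i : x_i ∈ E(T̂_n(S), Ĉ_n(S), s)} ≥ nγ }`. -/
def sampleRadius {k n : ℕ} (x : Fin n → Vec k) (γ : ℝ) (S : Finset (Fin n)) : ℝ :=
  sInf {s : ℝ | 0 < s ∧ (n : ℝ) * γ ≤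
    (Finset.univ.filter fun i =>
      x i ∈ ellipsoid (sampleMean x S) (sampleCov x S) s).card}

section AuxMCD
open Matrix
open scoped MatrixOrder

lemma euclid_sum_apply {k : ℕ} {ι : Type*} (x : ι → Vec k) (S : Finset ι) (a : Fin k) :
    (∑ i ∈ S, x i) a = ∑ i ∈ S, x i a := by
  induction S using Finset.cons_induction with
  | empty => rfl
  | cons i T hi ih => rw [Finset.sum_cons, Finset.sum_cons, ← ih]; rfl
lemma sampleMean_apply {k : ℕ} {ι : Type*} (x : ι → Vec k) (S : Finset ι) (a : Fin k) :
    sampleMean x S a = (S.card : ℝ)⁻¹ * ∑ i ∈ S, x i a := by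
  simp [sampleMean, euclid_sum_apply]
lemma sampleCov_apply {k : ℕ} {ι : Type*} (x : ι → Vec k) (S : Finset ι) (a b : Fin k) :
    sampleCov x S a b = (S.card : ℝ)⁻¹ *
      ∑ i ∈ S, (x i a - sampleMean x S a) * (x i b - sampleMean x S b) := rfl
lemma sampleCov_symm {k : ℕ} {ι : Type*} (x : ι → Vec k) (S : Finset ι) (a b : Fin k) :
    sampleCov x S a b = sampleCov x S b a := by
  simp only [sampleCov_apply]
  congr 1
  exact Finset.sum_congr rfl fun i _ => mul_comm _ _
lemma sum_dev_zero {k : ℕ} {ι : Type*} (x : ι → Vec k) (S : Finset ι) (hS : S.Nonempty)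
    (a : Fin k) : ∑ i ∈ S, (x i a - sampleMean x S a) = 0 := by
  have hc : (S.card : ℝ) ≠ 0 := by exact_mod_cast Finset.card_ne_zero.2 hS
  rw [Finset.sum_sub_distrib, sampleMean_apply, Finset.sum_const, nsmul_eq_mul, ← mul_assoc, mul_inv_cancel₀ hc, one_mul, sub_self]
lemma sum_mul_sampleCov {k : ℕ} {ι : Type*} (x : ι → Vec k) (S : Finset ι) (hS : S.Nonempty)
    (a b : Fin k) :
    ∑ i ∈ S, (x i a - sampleMean x S a) * (x i b - sampleMean x S b)
      = (S.card : ℝ) * sampleCov x S a b := by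
  rw [sampleCov_apply, ← mul_assoc, mul_inv_cancel₀ (by exact_mod_cast Finset.card_ne_zero.2 hS), one_mul]
def Q {k : ℕ} (M : Matrix (Fin k) (Fin k) ℝ) (v : Fin k → ℝ) : ℝ :=
  ∑ a, ∑ b, v a * M a b * v b

lemma Q_eq_dot {k : ℕ} (M : Matrix (Fin k) (Fin k) ℝ) (v : Fin k → ℝ) :
    Q M v = dotProduct v (M.mulVec v) := by
  simp [Q, dotProduct, Matrix.mulVec, Finset.mul_sum, mul_assoc]

lemma Q_nonneg {k : ℕ} {M : Matrix (Fin k) (Fin k) ℝ} (hM : M.PosSemidef) (v : Fin k → ℝ) :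
    0 ≤ Q M v := by
  have := hM.dotProduct_mulVec_nonneg v
  simpa [Q_eq_dot] using this

lemma Q_pos {k : ℕ} {M : Matrix (Fin k) (Fin k) ℝ} (hM : M.PosDef) {v : Fin k → ℝ}
    (hv : v ≠ 0) : 0 < Q M v := by
  have := hM.dotProduct_mulVec_pos hv
  simpa [Q_eq_dot] using this

lemma sum_prod_dev {k : ℕ} {ι : Type*} (x : ι → Vec k) (S : Finset ι) (hS : S.Nonempty)
    (μ : Vec k) (a b : Fin k) :
    ∑ i ∈ S, (x i a - μ a) * (x i b - μ b)
      = (S.card : ℝ) * sampleCov x S a b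
        + (S.card : ℝ) * ((sampleMean x S a - μ a) * (sampleMean x S b - μ b)) := by
  have h1 := sum_dev_zero x S hS a
  have h2 := sum_dev_zero x S hS b
  have e : ∀ i, (x i a - μ a) * (x i b - μ b)
      = (x i a - sampleMean x S a) * (x i b - sampleMean x S b)
        + (x i a - sampleMean x S a) * (sampleMean x S b - μ b)
        + (sampleMean x S a - μ a) * (x i b - sampleMean x S b)
        + (sampleMean x S a - μ a) * (sampleMean x S b - μ b) := fun i => by ring
  rw [Finset.sum_congr rfl fun i _ => e i]
  simp only [Finset.sum_add_distrib, ← Finset.sum_mul, ← Finset.mul_sum, h1, h2,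
    sum_mul_sampleCov x S hS, Finset.sum_const, nsmul_eq_mul]
  ring

lemma sum_Q_eq {k : ℕ} {ι : Type*} (x : ι → Vec k) (S : Finset ι) (hS : S.Nonempty)
    (M : Matrix (Fin k) (Fin k) ℝ) (μ : Vec k) :
    ∑ i ∈ S, Q M (fun a => x i a - μ a)
      = (S.card : ℝ) * (∑ a, ∑ b, M a b * sampleCov x S a b)
        + (S.card : ℝ) * Q M (fun a => sampleMean x S a - μ a) := by
  calc ∑ i ∈ S, Q M (fun a => x i a - μ a)
      = ∑ a, ∑ b, M a b * ∑ i ∈ S, (x i a - μ a) * (x i b - μ b) := by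
        simp only [Q]
        rw [Finset.sum_comm]
        refine Finset.sum_congr rfl fun a _ => ?_
        rw [Finset.sum_comm]
        refine Finset.sum_congr rfl fun b _ => ?_
        rw [Finset.mul_sum]
        exact Finset.sum_congr rfl fun i _ => by ring
    _ = (S.card : ℝ) * (∑ a, ∑ b, M a b * sampleCov x S a b)
        + (S.card : ℝ) * Q M (fun a => sampleMean x S a - μ a) := by
        simp only [sum_prod_dev x S hS μ, mul_add, Finset.sum_add_distrib, Q, Finset.mul_sum]
        congr 1 <;> exact Finset.sum_congr rfl fun a _ => (Finset.sum_congr rfl fun b _ => by ring)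

lemma sampleCov_posSemidef {k : ℕ} {ι : Type*} (x : ι → Vec k) (S : Finset ι) :
    (sampleCov x S).PosSemidef := by
  refine Matrix.PosSemidef.of_dotProduct_mulVec_nonneg ?_ ?_
  · ext a b
    simp only [Matrix.conjTranspose_apply, star_trivial]
    exact sampleCov_symm x S b a
  · intro v
    have expand : dotProduct (star v) ((sampleCov x S).mulVec v)
        = (S.card : ℝ)⁻¹ * ∑ i ∈ S, (∑ a, v a * (x i a - sampleMean x S a)) ^ 2 := by
      simp only [dotProduct, Matrix.mulVec, sampleCov_apply, Pi.star_apply, star_trivial]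
      rw [Finset.mul_sum]
      calc ∑ a, v a * ∑ b, ((S.card : ℝ)⁻¹ * ∑ i ∈ S, (x i a - sampleMean x S a) * (x i b - sampleMean x S b)) * v b
          = ∑ a, ∑ b, ∑ i ∈ S, (S.card : ℝ)⁻¹ * ((v a * (x i a - sampleMean x S a)) * (v b * (x i b - sampleMean x S b))) := by
            refine Finset.sum_congr rfl fun a _ => ?_
            rw [Finset.mul_sum]
            refine Finset.sum_congr rfl fun b _ => ?_
            simp only [Finset.mul_sum, Finset.sum_mul]
            exact Finset.sum_congr rfl fun i _ => by ring
        _ = ∑ i ∈ S, (S.card : ℝ)⁻¹ * (∑ a, v a * (x i a - sampleMean x S a)) ^ 2 := by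
            have swap : ∀ f : Fin k → Fin k → ι → ℝ,
                (∑ a, ∑ b, ∑ i ∈ S, f a b i) = ∑ i ∈ S, ∑ a, ∑ b, f a b i := fun f =>
              calc ∑ a, ∑ b, ∑ i ∈ S, f a b i
                  = ∑ a, ∑ i ∈ S, ∑ b, f a b i :=
                    Finset.sum_congr rfl fun a _ => Finset.sum_comm
                _ = ∑ i ∈ S, ∑ a, ∑ b, f a b i := Finset.sum_comm
            rw [swap]
            refine Finset.sum_congr rfl fun i _ => ?_
            rw [sq, Finset.sum_mul_sum, Finset.mul_sum]
            exact Finset.sum_congr rfl fun a _ => by rw [Finset.mul_sum]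
    rw [expand]
    positivity
lemma amgm_fin {k : ℕ} (hk : 1 ≤ k) (f : Fin k → ℝ) (hf : ∀ i, 0 ≤ f i) :
    ∏ i, f i ≤ ((∑ i, f i) / k) ^ k := by
  have hk0 : (0:ℝ) < k := by exact_mod_cast hk
  have hw : ∑ _i : Fin k, (k:ℝ)⁻¹ = 1 := by
    simp [Finset.sum_const, mul_comm]
    field_simp
  have hgm := Real.geom_mean_le_arith_mean_weighted Finset.univ (fun _ => (k:ℝ)⁻¹) f
    (fun i _ => by positivity) hw (fun i _ => hf i)
  -- hgm : ∏ i, f i ^ (k⁻¹:ℝ) ≤ ∑ i, k⁻¹ * f i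
  have hprod : (∏ i, f i ^ ((k:ℝ)⁻¹)) ^ k = ∏ i, f i := by
    rw [← Finset.prod_pow]
    refine Finset.prod_congr rfl fun i _ => ?_
    rw [← Real.rpow_natCast (f i ^ ((k:ℝ)⁻¹)) k, ← Real.rpow_mul (hf i),
      inv_mul_cancel₀ (ne_of_gt hk0), Real.rpow_one]
  have hnn : 0 ≤ ∏ i, f i ^ ((k:ℝ)⁻¹) :=
    Finset.prod_nonneg fun i _ => Real.rpow_nonneg (hf i) _
  calc ∏ i, f i = (∏ i, f i ^ ((k:ℝ)⁻¹)) ^ k := hprod.symm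
    _ ≤ (∑ i, (k:ℝ)⁻¹ * f i) ^ k := pow_le_pow_left₀ hnn hgm k
    _ = ((∑ i, f i) / k) ^ k := by rw [← Finset.mul_sum]; ring_nf

lemma trace_eq_sum_eigenvalues {k : ℕ} {A : Matrix (Fin k) (Fin k) ℝ} (hA : A.IsHermitian) :
    A.trace = ∑ i, hA.eigenvalues i := by
  simpa using hA.trace_eq_sum_eigenvalues

lemma det_le_trace_pow {k : ℕ} (hk : 1 ≤ k) {D : Matrix (Fin k) (Fin k) ℝ}
    (hD : D.PosSemidef) : D.det ≤ (D.trace / k) ^ k := by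
  have hdet : D.det = ∏ i, hD.1.eigenvalues i := by
    rw [hD.1.det_eq_prod_eigenvalues]; norm_num
  have htr : D.trace = ∑ i, hD.1.eigenvalues i := trace_eq_sum_eigenvalues hD.1
  rw [hdet, htr]
  exact amgm_fin hk _ hD.eigenvalues_nonneg

lemma trace_nonneg_of_psd {k : ℕ} {D : Matrix (Fin k) (Fin k) ℝ} (hD : D.PosSemidef) :
    0 ≤ D.trace := by
  rw [trace_eq_sum_eigenvalues hD.1]
  exact Finset.sum_nonneg fun i _ => hD.eigenvalues_nonneg i

lemma trace_mul_sampleCov {k : ℕ} {ι : Type*} (x : ι → Vec k) (T : Finset ι)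
    (M : Matrix (Fin k) (Fin k) ℝ) :
    (M * sampleCov x T).trace = ∑ a, ∑ b, M a b * sampleCov x T a b := by
  simp only [Matrix.trace, Matrix.diag, Matrix.mul_apply]
  exact Finset.sum_congr rfl fun a _ => Finset.sum_congr rfl fun b _ => by
    rw [sampleCov_symm x T b a]

lemma key_det_le {k : ℕ} {ι : Type*} (hk : 1 ≤ k) (x : ι → Vec k) (T : Finset ι)
    (hT : T.Nonempty) {A : Matrix (Fin k) (Fin k) ℝ} (hA : A.PosDef) (μ : Vec k) :
    0 ≤ ((T.card : ℝ) * k)⁻¹ * ∑ i ∈ T, Q A⁻¹ (fun a => x i a - μ a) ∧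
    (sampleCov x T).det ≤
      A.det * (((T.card : ℝ) * k)⁻¹ * ∑ i ∈ T, Q A⁻¹ (fun a => x i a - μ a)) ^ k ∧
    (sampleMean x T ≠ μ →
      (sampleCov x T).det <
        A.det * (((T.card : ℝ) * k)⁻¹ * ∑ i ∈ T, Q A⁻¹ (fun a => x i a - μ a)) ^ k) := by
  have hk0 : (0:ℝ) < k := by exact_mod_cast hk
  have hcard : (0:ℝ) < T.card := by exact_mod_cast Finset.card_pos.2 hT
  set C := sampleCov x T with hCdef
  have hC : C.PosSemidef := sampleCov_posSemidef x T
  have hAinv : A⁻¹.PosDef := hA.inv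
  set R := CFC.sqrt A⁻¹ with hRdef
  have hR : R.PosSemidef := (CFC.sqrt_nonneg A⁻¹).posSemidef
  have hRR : R * R = A⁻¹ := CFC.sqrt_mul_sqrt_self A⁻¹ hAinv.posSemidef.nonneg
  have hRH : Rᴴ = R := hR.1
  set D := R * C * R with hDdef
  have hD : D.PosSemidef := by
    have := hC.conjTranspose_mul_mul_same R
    rwa [hRH] at this
  have hdetD : D.det = A⁻¹.det * C.det := by
    rw [hDdef, Matrix.det_mul, Matrix.det_mul, ← hRR, Matrix.det_mul]
    ring
  have htrD : D.trace = (A⁻¹ * C).trace := by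
    rw [hDdef, Matrix.trace_mul_cycle, hRR]
  have htrace_form : (A⁻¹ * C).trace = ∑ a, ∑ b, A⁻¹ a b * C a b := by
    simp only [Matrix.trace, Matrix.diag, Matrix.mul_apply]
    exact Finset.sum_congr rfl fun a _ => Finset.sum_congr rfl fun b _ => by
      simp only [hCdef]
      rw [sampleCov_symm x T b a]
  set t₀ : ℝ := (A⁻¹ * C).trace / k with ht₀def
  set δ : ℝ := Q A⁻¹ (fun a => sampleMean x T a - μ a) / k with hδdef
  have hbase : ((T.card : ℝ) * k)⁻¹ * ∑ i ∈ T, Q A⁻¹ (fun a => x i a - μ a) = t₀ + δ := by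
    rw [sum_Q_eq x T hT A⁻¹ μ, ← htrace_form, ht₀def, hδdef]
    field_simp
  have ht₀ : 0 ≤ t₀ := by
    rw [ht₀def, ← htrD]
    exact div_nonneg (trace_nonneg_of_psd hD) (le_of_lt hk0)
  have hδ0 : 0 ≤ δ :=
    div_nonneg (Q_nonneg hAinv.posSemidef _) (le_of_lt hk0)
  have hdetA : 0 < A.det := hA.det_pos
  have hu : IsUnit A.det := hdetA.ne'.isUnit
  have hAAinv : A.det * A⁻¹.det = 1 := by
    rw [← Matrix.det_mul, Matrix.mul_nonsing_inv A hu, Matrix.det_one]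
  have hmain : C.det ≤ A.det * t₀ ^ k := by
    have h1 : D.det ≤ (D.trace / ↑k) ^ k := det_le_trace_pow hk hD
    rw [hdetD, htrD, ← ht₀def] at h1
    calc C.det = A.det * (A⁻¹.det * C.det) := by rw [← mul_assoc, hAAinv, one_mul]
      _ ≤ A.det * t₀ ^ k := by
          exact mul_le_mul_of_nonneg_left h1 (le_of_lt hdetA)
  refine ⟨by rw [hbase]; exact add_nonneg ht₀ hδ0, ?_, ?_⟩
  · rw [hbase]
    refine hmain.trans (mul_le_mul_of_nonneg_left ?_ (le_of_lt hdetA))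
    exact pow_le_pow_left₀ ht₀ (le_add_of_nonneg_right hδ0) k
  · intro hne
    have he : (fun a => sampleMean x T a - μ a) ≠ 0 := by
      intro h0
      apply hne
      ext a
      have := congrFun h0 a
      simpa [sub_eq_zero] using this
    have hδpos : 0 < δ := div_pos (Q_pos hAinv he) hk0
    rw [hbase]
    refine lt_of_le_of_lt hmain ?_
    refine mul_lt_mul_of_pos_left ?_ hdetA
    exact pow_lt_pow_left₀ (by linarith) ht₀ (by omega)


end AuxMCD

set_option maxHeartbeats 2000000 in
theorem mcd_subsample_separating_ellipsoid {k : ℕ} (hk : 1 ≤ k)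
    (n : ℕ) (hn : 1 ≤ n) (x : Fin n → Vec k)
    (γ : ℝ) (hγ0 : 0 < γ) (hγ1 : γ ≤ 1)
    (S : Finset (Fin n)) (hS : IsMCDSubsample x γ S)
    (hpd : (sampleCov x S).PosDef) :
    S.card = ⌈(n : ℝ) * γ⌉₊ ∧
    (∀ i ∈ S, x i ∈ ellipsoid (sampleMean x S) (sampleCov x S) (sampleRadius x γ S)) ∧
    (∀ i : Fin n, x i ∈ ellipsoid (sampleMean x S) (sampleCov x S) (sampleRadius x γ S) →
      ∃ j ∈ S, x j = x i) := by
  obtain ⟨hcard_le, hmin⟩ := hS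
  have hk0 : (0:ℝ) < k := by exact_mod_cast hk
  set m := ⌈(n : ℝ) * γ⌉₊ with hmdef
  have hnγpos : 0 < (n:ℝ) * γ := by
    have : (0:ℝ) < n := by exact_mod_cast hn
    positivity
  have hm1 : 1 ≤ m := Nat.ceil_pos.mpr hnγpos
  have hSne : S.Nonempty := Finset.card_pos.mp (lt_of_lt_of_le hm1 hcard_le)
  have hcardS : (0:ℝ) < S.card := by exact_mod_cast Finset.card_pos.mpr hSne
  set μS := sampleMean x S with hμdef
  set C := sampleCov x S with hCdef
  have hdetC : 0 < C.det := hpd.det_pos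
  have hCinv : C⁻¹.PosDef := hpd.inv
  set q : Fin n → ℝ := fun i => Q C⁻¹ (fun a => x i a - μS a) with hqdef
  have hq' : ∀ i, Q C⁻¹ (fun a => x i a - μS a) = q i := fun i => rfl
  have hqnn : ∀ i, 0 ≤ q i := fun i => Q_nonneg hCinv.posSemidef _
  have hu : IsUnit C.det := hdetC.ne'.isUnit
  -- total Mahalanobis mass
  have hsumq : ∑ i ∈ S, q i = (S.card : ℝ) * k := by
    have hz : Q C⁻¹ (fun a => sampleMean x S a - μS a) = 0 := by
      simp only [hμdef, sub_self, Q, mul_zero, zero_mul, Finset.sum_const_zero]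
    have htr : (∑ a, ∑ b, C⁻¹ a b * sampleCov x S a b) = (k:ℝ) := by
      rw [← trace_mul_sampleCov, ← hCdef, Matrix.nonsing_inv_mul C hu, Matrix.trace_one]
      simp
    have := sum_Q_eq x S hSne C⁻¹ μS
    simp only [hq', hz, mul_zero, add_zero, htr] at this
    exact this
  -- maximal point of S
  obtain ⟨j₀, hj₀S, hj₀max⟩ := S.exists_max_image q hSne
  have hmax_ge : ∀ j ∈ S, ∀ l ∈ S, (∀ i ∈ S, q i ≤ q l) → (k:ℝ) ≤ q l := by
    intro j hj l hl hmax
    have h1 : (S.card : ℝ) * k = ∑ i ∈ S, q i := hsumq.symm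
    have h2 : ∑ i ∈ S, q i ≤ S.card * q l := by
      calc ∑ i ∈ S, q i ≤ ∑ _i ∈ S, q l := Finset.sum_le_sum fun i hi => hmax i hi
        _ = S.card * q l := by rw [Finset.sum_const, nsmul_eq_mul]
    have := h1.trans_le h2
    exact le_of_mul_le_mul_left this hcardS
  have hqj₀ : (k:ℝ) ≤ q j₀ := hmax_ge j₀ hj₀S j₀ hj₀S hj₀max
  have hqj₀pos : 0 < q j₀ := lt_of_lt_of_le hk0 hqj₀
  -- Part 1 : S.card = m
  have part1 : S.card = m := by
    by_contra hne
    have hlt : m < S.card := lt_of_le_of_ne hcard_le (Ne.symm hne)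
    have hc2 : 2 ≤ S.card := by omega
    have hc2' : (2:ℝ) ≤ S.card := by exact_mod_cast hc2
    set S' := S.erase j₀ with hS'def
    have hS'card : S'.card = S.card - 1 := Finset.card_erase_of_mem hj₀S
    have hS'ne : S'.Nonempty := Finset.card_pos.mp (by omega)
    have hS'cast : (S'.card : ℝ) = (S.card : ℝ) - 1 := by
      rw [hS'card]; push_cast [Nat.cast_sub (by omega : 1 ≤ S.card)]; ring
    have hsum' : ∑ l ∈ S', q l = (S.card : ℝ) * k - q j₀ := by
      have := Finset.add_sum_erase S q hj₀S
      rw [← hS'def] at this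
      linarith [this, hsumq]
    obtain ⟨hb0, hble, hblt⟩ := key_det_le hk x S' hS'ne hpd μS
    simp only [hq', hsum', ← hCdef] at hb0 hble hblt
    have hminS' := hmin S' (by rw [hS'card]; omega)
    rcases lt_or_eq_of_le hqj₀ with hqgt | hqeq
    · -- q j₀ > k : strict decrease
      have hbase_lt : ((S'.card : ℝ) * k)⁻¹ * ((S.card : ℝ) * k - q j₀) < 1 := by
        rw [hS'cast]
        rw [inv_mul_lt_iff₀ (by nlinarith)]
        nlinarith
      have : (sampleCov x S').det < C.det := by
        refine lt_of_le_of_lt hble ?_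
        calc C.det * (((S'.card : ℝ) * k)⁻¹ * ((S.card : ℝ) * k - q j₀)) ^ k
            < C.det * 1 := by
              refine mul_lt_mul_of_pos_left ?_ hdetC
              exact pow_lt_one₀ hb0 hbase_lt (by omega)
          _ = C.det := mul_one _
      exact absurd hminS' (not_le.mpr this)
    · -- q j₀ = k : equality forces x j₀ = mean, contradiction
      have hbase1 : ((S'.card : ℝ) * k)⁻¹ * ((S.card : ℝ) * k - q j₀) = 1 := by
        rw [hS'cast, ← hqeq,
          show (S.card:ℝ) * k - k = ((S.card:ℝ) - 1) * k by ring,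
          inv_mul_cancel₀ (ne_of_gt (by nlinarith))]
      have hmean : sampleMean x S' = μS := by
        by_contra hne'
        have := hblt hne'
        rw [hbase1, one_pow, mul_one] at this
        exact absurd hminS' (not_le.mpr this)
      -- x j₀ = μS
      have hxj : ∀ a, x j₀ a = μS a := by
        intro a
        have h1 : sampleMean x S' a = μS a := congrArg (fun v : Vec k => v a) hmean
        rw [sampleMean_apply] at h1
        have h2 : ∑ l ∈ S', x l a = ∑ l ∈ S, x l a - x j₀ a := by
          have := Finset.add_sum_erase S (fun l => x l a) hj₀S
          rw [← hS'def] at this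
          linarith
        have h3 : μS a = (S.card : ℝ)⁻¹ * ∑ l ∈ S, x l a := by
          rw [hμdef, sampleMean_apply]
        rw [h2, h3, hS'cast] at h1
        have hc1 : (S.card : ℝ) - 1 ≠ 0 := by
          have : (2:ℝ) ≤ S.card := by exact_mod_cast hc2
          linarith
        field_simp at h1
        have h4 : x j₀ a * (S.card : ℝ) = ∑ l ∈ S, x l a := by linear_combination -h1
        rw [h3, ← h4]
        field_simp
      have : q j₀ = 0 := by
        rw [← hq' j₀]
        have : (fun a => x j₀ a - μS a) = fun _ => 0 := funext fun a => by rw [hxj a, sub_self]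
        rw [this]
        simp [Q]
      rw [← hqeq] at this
      exact absurd this (ne_of_gt hk0)
  -- swap lemma
  have hswap : ∀ j ∈ S, ∀ i, i ∉ S → q i ≤ q j → x i = x j ∧ q i = q j := by
    intro j hj i hiS hle
    set S₂ := insert i (S.erase j) with hS₂def
    have hiej : i ∉ S.erase j := fun h => hiS (Finset.mem_of_mem_erase h)
    have hcards₂ : S₂.card = S.card := by
      rw [hS₂def, Finset.card_insert_of_notMem hiej, Finset.card_erase_of_mem hj]
      have := Finset.card_pos.mpr ⟨j, hj⟩
      omega
    have hS₂ne : S₂.Nonempty := ⟨i, Finset.mem_insert_self i _⟩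
    have hsum₂ : ∑ l ∈ S₂, q l = (S.card : ℝ) * k + (q i - q j) := by
      rw [hS₂def, Finset.sum_insert hiej]
      have h5 := Finset.add_sum_erase S q hj
      linarith [hsumq, h5]
    obtain ⟨hb0, hble, hblt⟩ := key_det_le hk x S₂ hS₂ne hpd μS
    simp only [hq', hsum₂, hcards₂] at hb0 hble hblt
    have hminS₂ := hmin S₂ (by rw [hcards₂]; exact hcard_le)
    have hck : (0:ℝ) < (S.card : ℝ) * k := by positivity
    have heq : q i = q j := by
      by_contra hne'
      have hltq : q i < q j := lt_of_le_of_ne hle hne'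
      have hbase_lt : ((S.card : ℝ) * k)⁻¹ * ((S.card : ℝ) * k + (q i - q j)) < 1 := by
        rw [inv_mul_lt_iff₀ hck]
        linarith
      have hlt2 : (sampleCov x S₂).det < C.det := by
        refine lt_of_le_of_lt hble ?_
        calc C.det * (((S.card:ℝ)*k)⁻¹ * ((S.card:ℝ)*k + (q i - q j))) ^ k
            < C.det * 1 :=
              mul_lt_mul_of_pos_left (pow_lt_one₀ hb0 hbase_lt (by omega)) hdetC
          _ = C.det := mul_one _
      exact absurd hminS₂ (not_le.mpr hlt2)
    have hbase1 : ((S.card : ℝ) * k)⁻¹ * ((S.card : ℝ) * k + (q i - q j)) = 1 := by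
      rw [heq]
      field_simp
      ring
    have hmean : sampleMean x S₂ = μS := by
      by_contra hne'
      have hlt3 := hblt hne'
      rw [hbase1, one_pow, mul_one] at hlt3
      exact absurd hminS₂ (not_le.mpr hlt3)
    refine ⟨?_, heq⟩
    ext a
    have h1 : sampleMean x S₂ a = μS a := congrArg (fun v : Vec k => v a) hmean
    rw [sampleMean_apply, hcards₂] at h1
    have h2 : ∑ l ∈ S₂, x l a = ∑ l ∈ S, x l a + x i a - x j a := by
      rw [hS₂def, Finset.sum_insert hiej]
      have h5 := Finset.add_sum_erase S (fun l => x l a) hj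
      simp only at h5
      linarith
    have h3 : μS a = (S.card : ℝ)⁻¹ * ∑ l ∈ S, x l a := by rw [hμdef, sampleMean_apply]
    rw [h2, h3] at h1
    have hcne : (S.card : ℝ) ≠ 0 := ne_of_gt hcardS
    have h4 := mul_left_cancel₀ (inv_ne_zero hcne) h1
    linarith
  -- the radius
  set r := Real.sqrt (q j₀) with hrdef
  have hrpos : 0 < r := Real.sqrt_pos.mpr hqj₀pos
  have hr2 : r ^ 2 = q j₀ := Real.sq_sqrt (le_of_lt hqj₀pos)
  have hmem : ∀ (i : Fin n) (s : ℝ), x i ∈ ellipsoid μS C s ↔ q i ≤ s ^ 2 :=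
    fun i s => Iff.rfl
  have hseteq : {s : ℝ | 0 < s ∧ (n : ℝ) * γ ≤
      (Finset.univ.filter fun i =>
        x i ∈ ellipsoid (sampleMean x S) (sampleCov x S) s).card}
      = Set.Ici r := by
    ext s
    simp only [Set.mem_setOf_eq, Set.mem_Ici]
    constructor
    · rintro ⟨hs0, hsc⟩
      by_contra hsr
      push_neg at hsr
      have hs2 : s ^ 2 < q j₀ := by
        rw [← hr2]
        exact pow_lt_pow_left₀ hsr (le_of_lt hs0) (by norm_num)
      have hsub : (Finset.univ.filter fun i =>
          x i ∈ ellipsoid (sampleMean x S) (sampleCov x S) s) ⊆ S.erase j₀ := by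
        intro i hi
        rw [Finset.mem_filter] at hi
        have hqi : q i ≤ s ^ 2 := (hmem i s).mp hi.2
        have hqi' : q i < q j₀ := lt_of_le_of_lt hqi hs2
        have hiS : i ∈ S := by
          by_contra hiS
          exact absurd (hswap j₀ hj₀S i hiS (le_of_lt hqi')).2 (ne_of_lt hqi')
        exact Finset.mem_erase.mpr ⟨fun h => absurd (h ▸ hqi') (lt_irrefl _), hiS⟩
      have hcount : (Finset.univ.filter fun i =>
          x i ∈ ellipsoid (sampleMean x S) (sampleCov x S) s).card ≤ m - 1 := by
        calc (Finset.univ.filter fun i =>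
            x i ∈ ellipsoid (sampleMean x S) (sampleCov x S) s).card
            ≤ (S.erase j₀).card := Finset.card_le_card hsub
          _ = S.card - 1 := Finset.card_erase_of_mem hj₀S
          _ = m - 1 := by rw [part1]
      have hle1 : (n:ℝ) * γ ≤ ((m - 1 : ℕ) : ℝ) :=
        le_trans hsc (by exact_mod_cast hcount)
      have hlt' : ((m - 1 : ℕ) : ℝ) < (n:ℝ) * γ := Nat.lt_ceil.mp (by omega)
      linarith
    · intro hrs
      refine ⟨lt_of_lt_of_le hrpos hrs, ?_⟩
      have hsub : S ⊆ Finset.univ.filter fun i =>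
          x i ∈ ellipsoid (sampleMean x S) (sampleCov x S) s := by
        intro i hi
        rw [Finset.mem_filter]
        refine ⟨Finset.mem_univ _, (hmem i s).mpr ?_⟩
        calc q i ≤ q j₀ := hj₀max i hi
          _ = r ^ 2 := hr2.symm
          _ ≤ s ^ 2 := pow_le_pow_left₀ (le_of_lt hrpos) hrs 2
      calc (n:ℝ) * γ ≤ (m : ℝ) := Nat.le_ceil _
        _ = (S.card : ℝ) := by rw [part1]
        _ ≤ _ := by exact_mod_cast Finset.card_le_card hsub
  have hradius : sampleRadius x γ S = r := by
    unfold sampleRadius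
    rw [hseteq, csInf_Ici]
  refine ⟨part1, ?_, ?_⟩
  · intro i hi
    have hqi : q i ≤ r ^ 2 := by rw [hr2]; exact hj₀max i hi
    rw [hradius]
    exact (hmem i r).mpr hqi
  · intro i hi
    rw [hradius] at hi
    have hqi : q i ≤ q j₀ := by rw [← hr2]; exact (hmem i r).mp hi
    by_cases hiS : i ∈ S
    · exact ⟨i, hiS, rfl⟩
    · exact ⟨j₀, hj₀S, ((hswap j₀ hj₀S i hiS hqi).1).symm⟩

end
end
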